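/- Let (S, A) be a weakly ergodic average scheme on a norming dual pair (X,Y). Then X = fix(S) ⊕ span‾^σ rg(I−S) and Y = fix(S') ⊕ span‾^{σ'} rg(I−S'). -/
import Mathlib


open Filter Topology Set

noncomputable section

/-- A norming dual pair `(X, Y, ⟨·,·⟩)`: Banach spaces `X`, `Y` with a bilinear duality
such that each norm is recovered as a supremum of pairings against the unit ball. -/
structure NormingDualPair (X Y : Type*) [NormedAddCommGroup X] [NormedSpace ℝ X]
    [NormedAddCommGroup Y] [NormedSpace ℝ Y] : Type _ where
  p : X →ₗ[ℝ] Y →ₗ[ℝ] ℝ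
  norm_eq_left : ∀ x : X, ‖x‖ = ⨆ y : {y : Y // ‖y‖ ≤ 1}, |p x y.1|
  norm_eq_right : ∀ y : Y, ‖y‖ = ⨆ x : {x : X // ‖x‖ ≤ 1}, |p x.1 y|

variable {X Y : Type*} [NormedAddCommGroup X] [NormedSpace ℝ X]
  [NormedAddCommGroup Y] [NormedSpace ℝ Y]

/-- The weak topology `σ(X,Y)` on `X` induced by the pairing. -/
def NormingDualPair.sigma (ndp : NormingDualPair X Y) : TopologicalSpace X :=
  TopologicalSpace.induced (fun x => fun y : Y => ndp.p x y) Pi.topologicalSpace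

/-- The weak topology `σ(Y,X)` on `Y` induced by the pairing. -/
def NormingDualPair.sigma' (ndp : NormingDualPair X Y) : TopologicalSpace Y :=
  TopologicalSpace.induced (fun y => fun x : X => ndp.p x y) Pi.topologicalSpace

/-- The fixed space `fix(𝒮) = ⋂_{S ∈ 𝒮} ker (I - S)`. -/
def fixedSpace (S : Set (X →L[ℝ] X)) : Set X := {x | ∀ s ∈ S, s x = x}

/-- The range `rg(I - 𝒮) = {x - Sx : x ∈ X, S ∈ 𝒮}`. -/
def rangeIminus (S : Set (X →L[ℝ] X)) : Set X := {z | ∃ x : X, ∃ s ∈ S, z = x - s x}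

/-- An average scheme `(𝒮, (A_α)_{α ∈ ι})` on a norming dual pair `(X,Y)`:
a semigroup `𝒮 ⊆ L(X,σ)` (σ-continuity encoded via the existence of adjoints on `Y`)
and a net of σ-continuous operators satisfying (AS1)-(AS3). -/
structure AverageScheme (ndp : NormingDualPair X Y) (ι : Type*) [Preorder ι] : Type _ where
  S : Set (X →L[ℝ] X)
  adj : (X →L[ℝ] X) → (Y →L[ℝ] Y)
  one_mem : (1 : X →L[ℝ] X) ∈ S
  comp_mem : ∀ s ∈ S, ∀ t ∈ S, s.comp t ∈ S
  adj_spec : ∀ s ∈ S, ∀ (x : X) (y : Y), ndp.p (s x) y = ndp.p x (adj s y)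
  A : ι → (X →L[ℝ] X)
  A' : ι → (Y →L[ℝ] Y)
  A'_spec : ∀ (α : ι) (x : X) (y : Y), ndp.p (A α x) y = ndp.p x (A' α y)
  normBound : ∃ M : ℝ, ∀ α : ι, ‖A α‖ ≤ M
  as2 : ∀ (α : ι) (x : X),
    A α x ∈ @closure X ndp.sigma (convexHull ℝ {z | ∃ s ∈ S, z = s x})
  as2' : ∀ (α : ι) (y : Y),
    A' α y ∈ @closure Y ndp.sigma' (convexHull ℝ {z | ∃ s ∈ S, z = adj s y})
  as3_left : ∀ s ∈ S, ∀ x : X, Tendsto (fun α : ι => A α (s x - x)) atTop (nhds 0)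
  as3_right : ∀ s ∈ S, ∀ x : X, Tendsto (fun α : ι => s (A α x) - A α x) atTop (nhds 0)
  as3'_left : ∀ s ∈ S, ∀ y : Y, Tendsto (fun α : ι => A' α (adj s y - y)) atTop (nhds 0)
  as3'_right : ∀ s ∈ S, ∀ y : Y, Tendsto (fun α : ι => adj s (A' α y) - A' α y) atTop (nhds 0)

/-- The fixed space of the adjoint semigroup `fix(𝒮')` in `Y`. -/
def AverageScheme.fix' {ι : Type*} [Preorder ι] {ndp : NormingDualPair X Y}
    (AS : AverageScheme ndp ι) : Set Y := {y | ∀ s ∈ AS.S, AS.adj s y = y}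

/-- The range `rg(I - 𝒮')` in `Y`. -/
def AverageScheme.rg' {ι : Type*} [Preorder ι] {ndp : NormingDualPair X Y}
    (AS : AverageScheme ndp ι) : Set Y := {z | ∃ y : Y, ∃ s ∈ AS.S, z = y - AS.adj s y}

/-- A filter (net) clusters in a topology: every finer nontrivial filter (subnet) has a
cluster point (i.e. a convergent subnet). -/
def ClustersIn {Z : Type*} (τ : TopologicalSpace Z) (F : Filter Z) : Prop :=
  ∀ G : Filter Z, G ≤ F → G.NeBot → ∃ z : Z, @ClusterPt Z τ z G

/-- Weak ergodicity: `σ`-convergence of `A_α x` for every `x` and `σ'`-convergence of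
`A'_α y` for every `y`. -/
def AverageScheme.WeaklyErgodic {ι : Type*} [Preorder ι] {ndp : NormingDualPair X Y}
    (AS : AverageScheme ndp ι) : Prop :=
  (∀ x : X, ∃ l : X, Tendsto (fun α : ι => AS.A α x) atTop (@nhds X ndp.sigma l)) ∧
  (∀ y : Y, ∃ l : Y, Tendsto (fun α : ι => AS.A' α y) atTop (@nhds Y ndp.sigma' l))

/-- The fixed space as a submodule. -/
def fixedSubmodule (S : Set (X →L[ℝ] X)) : Submodule ℝ X where
  carrier := {x | ∀ s ∈ S, s x = x}
  add_mem' := by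
    intro a b ha hb s hs
    simp only [Set.mem_setOf_eq] at *
    rw [map_add, ha s hs, hb s hs]
  zero_mem' := by
    intro s hs
    simp
  smul_mem' := by
    intro c x hx s hs
    simp only [Set.mem_setOf_eq] at *
    rw [map_smul, hx s hs]

section Helpers

variable {A B : Type*} [AddCommGroup A] [Module ℝ A] [AddCommGroup B] [Module ℝ B]

/-- The weak topology induced by a generic pairing. -/
@[reducible] def wtop (q : A →ₗ[ℝ] B →ₗ[ℝ] ℝ) : TopologicalSpace A :=
  TopologicalSpace.induced (fun a => fun b : B => q a b) Pi.topologicalSpace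

lemma wtop_tendsto {q : A →ₗ[ℝ] B →ₗ[ℝ] ℝ} {κ : Type*} {F : Filter κ} {u : κ → A} {l : A} :
    Tendsto u F (@nhds A (wtop q) l) ↔
      ∀ b : B, Tendsto (fun i => q (u i) b) F (nhds (q l b)) := by
  rw [wtop, nhds_induced, tendsto_comap_iff]
  exact tendsto_pi_nhds

lemma wtop_eval_continuous (q : A →ₗ[ℝ] B →ₗ[ℝ] ℝ) (b : B) :
    @Continuous A ℝ (wtop q) _ (fun a => q a b) := by
  letI : TopologicalSpace A := wtop q
  exact (continuous_apply b).comp continuous_induced_dom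

lemma wtop_closure_pair {q : A →ₗ[ℝ] B →ₗ[ℝ] ℝ} {s : Set A} {z : A}
    (hz : z ∈ @closure A (wtop q) s) {b : B} {c : ℝ} (hs : ∀ w ∈ s, q w b = c) :
    q z b = c := by
  letI : TopologicalSpace A := wtop q
  have hcl : IsClosed ((fun a => q a b) ⁻¹' {c}) :=
    IsClosed.preimage (wtop_eval_continuous q b) isClosed_singleton
  exact closure_minimal (fun w hw => hs w hw) hcl hz

lemma wtop_sub_continuous (q : A →ₗ[ℝ] B →ₗ[ℝ] ℝ) (x : A) :
    @Continuous A A (wtop q) (wtop q) (fun a => x - a) := by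
  letI : TopologicalSpace A := wtop q
  apply continuous_induced_rng.mpr
  apply continuous_pi
  intro b
  simp only [Function.comp_def, map_sub, LinearMap.sub_apply]
  exact continuous_const.sub (wtop_eval_continuous q b)

lemma wtop_closure_mono (q : A →ₗ[ℝ] B →ₗ[ℝ] ℝ) {s t : Set A} (h : s ⊆ t) :
    @closure A (wtop q) s ⊆ @closure A (wtop q) t := by
  letI : TopologicalSpace A := wtop q
  exact closure_mono h

lemma wtop_sub_mem_closure (q : A →ₗ[ℝ] B →ₗ[ℝ] ℝ) {x a : A} {s : Set A}
    (ha : a ∈ @closure A (wtop q) s) :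
    x - a ∈ @closure A (wtop q) ((fun z => x - z) '' s) := by
  letI : TopologicalSpace A := wtop q
  exact image_closure_subset_closure_image (wtop_sub_continuous q x) ⟨a, ha, rfl⟩

lemma wtop_mem_closure_of_tendsto (q : A →ₗ[ℝ] B →ₗ[ℝ] ℝ) {κ : Type*} {F : Filter κ}
    [F.NeBot] {u : κ → A} {l : A} {s : Set A}
    (h : Tendsto u F (@nhds A (wtop q) l))
    (hmem : ∀ i, u i ∈ @closure A (wtop q) s) :
    l ∈ @closure A (wtop q) s := by
  letI : TopologicalSpace A := wtop q
  have := mem_closure_of_tendsto h (Filter.Eventually.of_forall hmem)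
  rwa [closure_closure] at this

lemma convex_sub_mem (x : A) (W : Submodule ℝ A) :
    Convex ℝ {w : A | x - w ∈ W} := by
  intro w₁ h₁ w₂ h₂ a b ha hb hab
  simp only [Set.mem_setOf_eq] at *
  have key : x - (a • w₁ + b • w₂) = a • (x - w₁) + b • (x - w₂) := by
    rw [smul_sub, smul_sub,
      show a • x - a • w₁ + (b • x - b • w₂) = (a • x + b • x) - (a • w₁ + b • w₂) from by abel,
      ← add_smul, hab, one_smul]
  rw [key]
  exact W.add_mem (W.smul_mem a h₁) (W.smul_mem b h₂)

end Helpers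

section NDP

variable {X Y : Type*} [NormedAddCommGroup X] [NormedSpace ℝ X]
  [NormedAddCommGroup Y] [NormedSpace ℝ Y]

lemma pair_abs_le (ndp : NormingDualPair X Y) (x : X) (y : Y) :
    |ndp.p x y| ≤ ‖x‖ * ‖y‖ := by
  rcases eq_or_ne y 0 with rfl | hy
  · simp
  by_cases hb : BddAbove (Set.range fun y' : {y : Y // ‖y‖ ≤ 1} => |ndp.p x y'.1|)
  · have hy0 : (0 : ℝ) < ‖y‖ := norm_pos_iff.mpr hy
    have hy1 : ‖(‖y‖⁻¹ • y)‖ ≤ 1 := by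
      rw [norm_smul, norm_inv, norm_norm, inv_mul_cancel₀ (ne_of_gt hy0)]
    have hle : |ndp.p x ((‖y‖:ℝ)⁻¹ • y)| ≤ ‖x‖ := by
      rw [ndp.norm_eq_left]
      exact le_ciSup hb ⟨_, hy1⟩
    rw [map_smul, smul_eq_mul, abs_mul, abs_inv, abs_norm] at hle
    have h2 := mul_le_mul_of_nonneg_left hle (le_of_lt hy0)
    rw [← mul_assoc, mul_inv_cancel₀ (ne_of_gt hy0), one_mul] at h2
    linarith [h2]
  · have hx0 : ‖x‖ = 0 := by
      rw [ndp.norm_eq_left]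
      exact Real.iSup_of_not_bddAbove hb
    have hx : x = 0 := norm_eq_zero.mp hx0
    simp [hx]

lemma left_eq_zero (ndp : NormingDualPair X Y) (x : X) (h : ∀ y, ndp.p x y = 0) : x = 0 := by
  haveI : Nonempty {y : Y // ‖y‖ ≤ 1} := ⟨⟨0, by simp⟩⟩
  have : ‖x‖ = 0 := by
    rw [ndp.norm_eq_left]
    simp [h]
  exact norm_eq_zero.mp this

lemma right_eq_zero (ndp : NormingDualPair X Y) (y : Y) (h : ∀ x, ndp.p x y = 0) : y = 0 := by
  haveI : Nonempty {x : X // ‖x‖ ≤ 1} := ⟨⟨0, by simp⟩⟩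
  have : ‖y‖ = 0 := by
    rw [ndp.norm_eq_right]
    simp [h]
  exact norm_eq_zero.mp this

lemma tendsto_pair_left {κ : Type*} [Preorder κ] (ndp : NormingDualPair X Y) {u : κ → X}
    (hu : Tendsto u atTop (nhds 0)) (y : Y) :
    Tendsto (fun α => ndp.p (u α) y) atTop (nhds 0) := by
  have hbnd : ∀ α, ‖ndp.p (u α) y‖ ≤ ‖u α‖ * ‖y‖ := fun α => by
    rw [Real.norm_eq_abs]; exact pair_abs_le ndp (u α) y
  have hg : Tendsto (fun α => ‖u α‖ * ‖y‖) atTop (nhds 0) := by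
    simpa using hu.norm.mul_const ‖y‖
  exact squeeze_zero_norm hbnd hg

lemma tendsto_pair_right {κ : Type*} [Preorder κ] (ndp : NormingDualPair X Y) {v : κ → Y}
    (hv : Tendsto v atTop (nhds 0)) (x : X) :
    Tendsto (fun α => ndp.p x (v α)) atTop (nhds 0) := by
  have hbnd : ∀ α, ‖ndp.p x (v α)‖ ≤ ‖v α‖ * ‖x‖ := fun α => by
    rw [Real.norm_eq_abs, mul_comm]; exact pair_abs_le ndp x (v α)
  have hg : Tendsto (fun α => ‖v α‖ * ‖x‖) atTop (nhds 0) := by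
    simpa using hv.norm.mul_const ‖x‖
  exact squeeze_zero_norm hbnd hg

end NDP

theorem stmt9 {ι : Type*} [Preorder ι] [Nonempty ι] [IsDirected ι (· ≤ ·)]
    (ndp : NormingDualPair X Y) (AS : AverageScheme ndp ι)
    (h : AS.WeaklyErgodic) :
    ((∀ x : X, ∃ a ∈ fixedSpace AS.S,
        ∃ b ∈ @closure X ndp.sigma (Submodule.span ℝ (rangeIminus AS.S) : Set X), x = a + b) ∧
      fixedSpace AS.S ∩
        @closure X ndp.sigma (Submodule.span ℝ (rangeIminus AS.S) : Set X) ⊆ {0}) ∧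
    ((∀ y : Y, ∃ a ∈ AS.fix',
        ∃ b ∈ @closure Y ndp.sigma' (Submodule.span ℝ AS.rg' : Set Y), y = a + b) ∧
      AS.fix' ∩
        @closure Y ndp.sigma' (Submodule.span ℝ AS.rg' : Set Y) ⊆ {0}) := by
  haveI : (atTop : Filter ι).NeBot := atTop_neBot_iff.mpr ⟨‹_›, ‹_›⟩
  obtain ⟨hXe, hYe⟩ := h
  choose Lx hLx using hXe
  choose Ly hLy using hYe
  -- pairing-wise convergence
  have hσ : ∀ (x : X) (y : Y),
      Tendsto (fun α => ndp.p (AS.A α x) y) atTop (nhds (ndp.p (Lx x) y)) := by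
    intro x y
    exact (wtop_tendsto (q := ndp.p)).mp (hLx x) y
  have hσ' : ∀ (y : Y) (x : X),
      Tendsto (fun α => ndp.p x (AS.A' α y)) atTop (nhds (ndp.p x (Ly y))) := by
    intro y x
    have := (wtop_tendsto (q := ndp.p.flip)).mp (hLy y) x
    simpa [LinearMap.flip_apply] using this
  -- limits of A are fixed
  have hfix : ∀ x, Lx x ∈ fixedSpace AS.S := by
    intro x s hs
    have hy : ∀ y, ndp.p (s (Lx x) - Lx x) y = 0 := by
      intro y
      have ha : Tendsto (fun α => ndp.p (s (AS.A α x)) y) atTop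
          (nhds (ndp.p (s (Lx x)) y)) := by
        simp only [AS.adj_spec s hs]
        exact hσ x (AS.adj s y)
      have t1 : Tendsto (fun α => ndp.p (s (AS.A α x) - AS.A α x) y) atTop
          (nhds (ndp.p (s (Lx x)) y - ndp.p (Lx x) y)) := by
        simp only [map_sub, LinearMap.sub_apply]
        exact ha.sub (hσ x y)
      have t2 := tendsto_pair_left ndp (AS.as3_right s hs x) y
      have h0 := tendsto_nhds_unique t1 t2
      rw [map_sub, LinearMap.sub_apply]
      exact h0
    exact sub_eq_zero.mp (left_eq_zero ndp _ hy)
  -- limits of A' are fixed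
  have hfix' : ∀ y, Ly y ∈ AS.fix' := by
    intro y s hs
    have hx : ∀ x, ndp.p x (AS.adj s (Ly y) - Ly y) = 0 := by
      intro x
      have ha : Tendsto (fun α => ndp.p x (AS.adj s (AS.A' α y))) atTop
          (nhds (ndp.p x (AS.adj s (Ly y)))) := by
        simp only [← AS.adj_spec s hs]
        exact hσ' y (s x)
      have t1 : Tendsto (fun α => ndp.p x (AS.adj s (AS.A' α y) - AS.A' α y)) atTop
          (nhds (ndp.p x (AS.adj s (Ly y)) - ndp.p x (Ly y))) := by
        simp only [map_sub]
        exact ha.sub (hσ' y x)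
      have t2 := tendsto_pair_right ndp (AS.as3'_right s hs y) x
      have h0 := tendsto_nhds_unique t1 t2
      rw [map_sub]
      exact h0
    exact sub_eq_zero.mp (right_eq_zero ndp _ hx)
  have hadj1 : ∀ y : Y, AS.adj 1 y = y := by
    intro y
    refine sub_eq_zero.mp (right_eq_zero ndp _ fun x => ?_)
    rw [map_sub, ← AS.adj_spec 1 AS.one_mem x y]
    simp
  -- x - A α x lies in the σ-closure of the span
  have hWc : ∀ (x : X) (α : ι), x - AS.A α x ∈
      @closure X ndp.sigma (Submodule.span ℝ (rangeIminus AS.S) : Set X) := by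
    intro x α
    have h2 := AS.as2 α x
    have hsub : convexHull ℝ {z | ∃ s ∈ AS.S, z = s x} ⊆
        {w : X | x - w ∈ Submodule.span ℝ (rangeIminus AS.S)} := by
      apply convexHull_min _ (convex_sub_mem x (Submodule.span ℝ (rangeIminus AS.S)))
      rintro z ⟨s, hs, rfl⟩
      exact Submodule.subset_span ⟨x, s, hs, rfl⟩
    have hmem := wtop_sub_mem_closure ndp.p (x := x) h2
    refine wtop_closure_mono ndp.p ?_ hmem
    rintro _ ⟨w, hw, rfl⟩
    exact hsub hw
  have hmemW : ∀ x, x - Lx x ∈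
      @closure X ndp.sigma (Submodule.span ℝ (rangeIminus AS.S) : Set X) := by
    intro x
    have ht : Tendsto (fun α => x - AS.A α x) atTop (@nhds X ndp.sigma (x - Lx x)) := by
      refine (wtop_tendsto (q := ndp.p)).mpr fun y => ?_
      simp only [map_sub, LinearMap.sub_apply]
      exact tendsto_const_nhds.sub (hσ x y)
    exact wtop_mem_closure_of_tendsto ndp.p ht (hWc x)
  -- same on the Y side
  have hWc' : ∀ (y : Y) (α : ι), y - AS.A' α y ∈
      @closure Y ndp.sigma' (Submodule.span ℝ AS.rg' : Set Y) := by
    intro y α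
    have h2 := AS.as2' α y
    have hsub : convexHull ℝ {z | ∃ s ∈ AS.S, z = AS.adj s y} ⊆
        {w : Y | y - w ∈ Submodule.span ℝ AS.rg'} := by
      apply convexHull_min _ (convex_sub_mem y (Submodule.span ℝ AS.rg'))
      rintro z ⟨s, hs, rfl⟩
      exact Submodule.subset_span ⟨y, s, hs, rfl⟩
    have hmem := wtop_sub_mem_closure ndp.p.flip (x := y) h2
    refine wtop_closure_mono ndp.p.flip ?_ hmem
    rintro _ ⟨w, hw, rfl⟩
    exact hsub hw
  have hmemW' : ∀ y, y - Ly y ∈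
      @closure Y ndp.sigma' (Submodule.span ℝ AS.rg' : Set Y) := by
    intro y
    have ht : Tendsto (fun α => y - AS.A' α y) atTop (@nhds Y ndp.sigma' (y - Ly y)) := by
      refine (wtop_tendsto (q := ndp.p.flip)).mpr fun x => ?_
      simp only [map_sub, LinearMap.sub_apply, LinearMap.flip_apply]
      exact tendsto_const_nhds.sub (hσ' y x)
    exact wtop_mem_closure_of_tendsto ndp.p.flip ht (hWc' y)
  -- orthogonality
  have horth : ∀ b ∈ AS.fix', ∀ z ∈
      @closure X ndp.sigma (Submodule.span ℝ (rangeIminus AS.S) : Set X),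
      ndp.p z b = 0 := by
    intro b hb z hz
    refine wtop_closure_pair (q := ndp.p) hz fun w hw => ?_
    have hker : Submodule.span ℝ (rangeIminus AS.S) ≤ LinearMap.ker (ndp.p.flip b) := by
      rw [Submodule.span_le]
      rintro _ ⟨v, s, hs, rfl⟩
      simp only [SetLike.mem_coe, LinearMap.mem_ker, LinearMap.flip_apply, map_sub,
        LinearMap.sub_apply]
      rw [AS.adj_spec s hs, hb s hs, sub_self]
    have := hker hw
    simpa using this
  have horth' : ∀ b ∈ fixedSpace AS.S, ∀ z ∈
      @closure Y ndp.sigma' (Submodule.span ℝ AS.rg' : Set Y),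
      ndp.p b z = 0 := by
    intro b hb z hz
    have := wtop_closure_pair (q := ndp.p.flip) hz (b := b) (c := 0) ?_
    · simpa using this
    · intro w hw
      have hker : Submodule.span ℝ AS.rg' ≤ LinearMap.ker (ndp.p b) := by
        rw [Submodule.span_le]
        rintro _ ⟨v, s, hs, rfl⟩
        simp only [SetLike.mem_coe, LinearMap.mem_ker, map_sub]
        rw [← AS.adj_spec s hs, hb s hs, sub_self]
      have := hker hw
      simpa using this
  -- A α x = x in pairing for fixed x
  have hAfix : ∀ x ∈ fixedSpace AS.S, ∀ (α : ι) (y : Y),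
      ndp.p (AS.A α x) y = ndp.p x y := by
    intro x hx α y
    have hD : {z | ∃ s ∈ AS.S, z = s x} = {x} := by
      ext z
      simp only [Set.mem_setOf_eq, Set.mem_singleton_iff]
      constructor
      · rintro ⟨s, hs, rfl⟩; exact hx s hs
      · intro hz; exact ⟨1, AS.one_mem, by simp [hz]⟩
    have h2 := AS.as2 α x
    rw [hD, convexHull_singleton] at h2
    exact wtop_closure_pair (q := ndp.p) h2 (by rintro w rfl; rfl)
  have hA'fix : ∀ y ∈ AS.fix', ∀ (α : ι) (x : X),
      ndp.p x (AS.A' α y) = ndp.p x y := by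
    intro y hy α x
    have hD : {z | ∃ s ∈ AS.S, z = AS.adj s y} = {y} := by
      ext z
      simp only [Set.mem_setOf_eq, Set.mem_singleton_iff]
      constructor
      · rintro ⟨s, hs, rfl⟩; exact hy s hs
      · intro hz; exact ⟨1, AS.one_mem, by rw [hz, hadj1]⟩
    have h2 := AS.as2' α y
    rw [hD, convexHull_singleton] at h2
    have := wtop_closure_pair (q := ndp.p.flip) h2 (b := x) (c := ndp.p x y)
      (by rintro w rfl; rfl)
    simpa using this
  refine ⟨⟨fun x => ⟨Lx x, hfix x, x - Lx x, hmemW x, by abel⟩, ?_⟩,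
    ⟨fun y => ⟨Ly y, hfix' y, y - Ly y, hmemW' y, by abel⟩, ?_⟩⟩
  · rintro x ⟨hf, hc⟩
    simp only [Set.mem_singleton_iff]
    refine left_eq_zero ndp x fun y => ?_
    have h1 : ∀ α, ndp.p x (AS.A' α y) = ndp.p x y := fun α => by
      rw [← AS.A'_spec, hAfix x hf]
    have h3 : Tendsto (fun α => ndp.p x (AS.A' α y)) atTop (nhds (ndp.p x y)) := by
      simp only [h1]
      exact tendsto_const_nhds
    have hxy : ndp.p x y = ndp.p x (Ly y) := tendsto_nhds_unique h3 (hσ' y x)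
    rw [hxy]
    exact horth (Ly y) (hfix' y) x hc
  · rintro y ⟨hf, hc⟩
    simp only [Set.mem_singleton_iff]
    refine right_eq_zero ndp y fun x => ?_
    have h1 : ∀ α, ndp.p (AS.A α x) y = ndp.p x y := fun α => by
      rw [AS.A'_spec, hA'fix y hf]
    have h3 : Tendsto (fun α => ndp.p (AS.A α x) y) atTop (nhds (ndp.p x y)) := by
      simp only [h1]
      exact tendsto_const_nhds
    have hxy : ndp.p x y = ndp.p (Lx x) y := tendsto_nhds_unique h3 (hσ x y)
    rw [hxy]
    exact horth' (Lx x) (hfix x) y hc
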